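/- arXiv:0904.4310 — 10 statements merged into one kernel-verified Lean document; each statement's English description precedes it below -/
import Mathlib

section
/- Let M be a free R-module of rank 3. There is an R-module isomorphism ⋀³(⋀² M) ≅ (⋀³ M)⊗² sending (e₁∧e₂) ∧ (e₂∧e₃) ∧ (e₃∧e₁) to (e₁∧e₂∧e₃) ⊗ (e₁∧e₂∧e₃) for a basis e₁, e₂, e₃ of M. -/
open ExteriorAlgebra TensorProduct

/-- The wedge `v 0 ∧ ⋯ ∧ v (n-1)` as an element of the `n`-th exterior power `⋀[R]^n M`. -/
noncomputable def wedge {R M : Type*} [CommRing R] [AddCommGroup M] [Module R M]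
    (n : ℕ) (v : Fin n → M) : ⋀[R]^n M :=
  ⟨ExteriorAlgebra.ιMulti R n v, ExteriorAlgebra.ιMulti_range R n (Set.mem_range_self v)⟩

namespace StmtAux

variable {R M N : Type*} [CommRing R] [AddCommGroup M] [Module R M]
  [AddCommGroup N] [Module R N]

/-- `wedge` as an alternating map. -/
noncomputable def W (R : Type*) (M : Type*) [CommRing R] [AddCommGroup M] [Module R M]
    (n : ℕ) : M [⋀^Fin n]→ₗ[R] (⋀[R]^n M) :=
  (ExteriorAlgebra.ιMulti R n).codRestrict (⋀[R]^n M)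
    (fun v => ExteriorAlgebra.ιMulti_range R n (Set.mem_range_self v))

lemma W_apply (n : ℕ) (v : Fin n → M) : W R M n v = wedge n v := rfl

/-- Linear maps out of an exterior power agree if they agree on wedges. -/
lemma ext_on_power {n : ℕ} {f g : (⋀[R]^n M) →ₗ[R] N}
    (h : ∀ v : Fin n → M, f (wedge n v) = g (wedge n v)) : f = g := by
  have hmem : ∀ {x : ExteriorAlgebra R M},
      x ∈ Submodule.span R (Set.range (ExteriorAlgebra.ιMulti R n (M := M))) →
      x ∈ ⋀[R]^n M := fun hx => by
    rwa [ExteriorAlgebra.ιMulti_span_fixedDegree] at hx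
  refine LinearMap.ext ?_; rintro ⟨x, hx⟩
  have hx' : x ∈ Submodule.span R (Set.range (ExteriorAlgebra.ιMulti R n (M := M))) := by
    rwa [ExteriorAlgebra.ιMulti_span_fixedDegree]
  have : f ⟨x, hmem hx'⟩ = g ⟨x, hmem hx'⟩ := by
    refine Submodule.span_induction
      (p := fun y hy => f ⟨y, hmem hy⟩ = g ⟨y, hmem hy⟩) ?_ ?_ ?_ ?_ hx'
    · rintro y ⟨v, rfl⟩
      exact h v
    · simp [show (⟨0, hmem (Submodule.zero_mem _)⟩ : ⋀[R]^n M) = 0 from rfl]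
    · intro y z hy hz ihy ihz
      have hyz : (⟨y + z, hmem (Submodule.add_mem _ hy hz)⟩ : ⋀[R]^n M)
          = ⟨y, hmem hy⟩ + ⟨z, hmem hz⟩ := rfl
      rw [hyz, map_add, map_add, ihy, ihz]
    · intro a y hy ihy
      have hay : (⟨a • y, hmem (Submodule.smul_mem _ a hy)⟩ : ⋀[R]^n M)
          = a • (⟨y, hmem hy⟩ : ⋀[R]^n M) := rfl
      rw [hay, map_smul, map_smul, ihy]
  exact this

/-- Module-valued version of `AlternatingMap.eq_smul_basis_det`. -/
lemma key {n : ℕ} (b : Module.Basis (Fin n) R N) {P : Type*} [AddCommGroup P] [Module R P]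
    (f : N [⋀^Fin n]→ₗ[R] P) (v : Fin n → N) : f v = b.det v • f ⇑b := by
  have hf : f = (LinearMap.toSpanSingleton R P (f ⇑b)).compAlternatingMap b.det := by
    refine Module.Basis.ext_alternating b fun i hinj => ?_
    let σ : Equiv.Perm (Fin n) := Equiv.ofBijective i (Finite.injective_iff_bijective.1 hinj)
    change f (⇑b ∘ σ) = _
    have h1 : f (⇑b ∘ σ) = Equiv.Perm.sign σ • f ⇑b := AlternatingMap.map_perm f ⇑b σ
    have h2 : b.det (⇑b ∘ σ) = Equiv.Perm.sign σ • b.det ⇑b := AlternatingMap.map_perm _ ⇑b σ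
    simp only [LinearMap.compAlternatingMap_apply, LinearMap.toSpanSingleton_apply]
    change f (⇑b ∘ σ) = b.det (⇑b ∘ σ) • f ⇑b
    rw [h1, h2, Module.Basis.det_self]
    rcases Int.units_eq_one_or (Equiv.Perm.sign σ) with h | h <;> simp [h]
  conv_lhs => rw [hf]
  rfl

/-- A linear map on the exterior power obtained from an alternating map. -/
noncomputable def expand {n : ℕ} (f : M [⋀^Fin n]→ₗ[R] N) : (⋀[R]^n M) →ₗ[R] N :=
  (ExteriorAlgebra.liftAlternating (Pi.single n f)).comp (Submodule.subtype _)

lemma expand_wedge {n : ℕ} (f : M [⋀^Fin n]→ₗ[R] N) (v : Fin n → M) :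
    expand f (wedge n v) = f v := by
  simp [expand, wedge, ExteriorAlgebra.liftAlternating_apply_ιMulti]

variable (e : Module.Basis (Fin 3) R M)

/-- 2×2 minor coordinates on `⋀²M`. -/
noncomputable def a2 (i j : Fin 3) : M [⋀^Fin 2]→ₗ[R] R :=
  (Matrix.detRowAlternating : (Fin 2 → R) [⋀^Fin 2]→ₗ[R] R).compLinearMap
    (LinearMap.pi ![e.coord i, e.coord j])

lemma a2_apply (i j : Fin 3) (x y : M) :
    a2 e i j ![x, y] = e.coord i x * e.coord j y - e.coord j x * e.coord i y := by
  rw [a2, AlternatingMap.compLinearMap_apply]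
  change Matrix.det (Matrix.of fun k =>
    LinearMap.pi ![e.coord i, e.coord j] (![x, y] k)) = _
  rw [Matrix.det_fin_two]
  simp

noncomputable def cM : (⋀[R]^2 M) →ₗ[R] (Fin 3 → R) :=
  LinearMap.pi ![expand (a2 e 0 1), expand (a2 e 1 2), expand (a2 e 2 0)]

noncomputable def bv : Fin 3 → ⋀[R]^2 M :=
  ![wedge 2 ![e 0, e 1], wedge 2 ![e 1, e 2], wedge 2 ![e 2, e 0]]

noncomputable def hM : (Fin 3 → R) →ₗ[R] (⋀[R]^2 M) :=
  ∑ i : Fin 3, (LinearMap.toSpanSingleton R _ (bv e i)).comp (LinearMap.proj i)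

lemma hM_apply (x : Fin 3 → R) : hM e x = ∑ i : Fin 3, x i • bv e i := by
  simp [hM, LinearMap.sum_apply, LinearMap.toSpanSingleton_apply]

lemma coord_self (i : Fin 3) : e.coord i (e i) = 1 := by simp
lemma coord_ne (i j : Fin 3) (h : i ≠ j) : e.coord i (e j) = 0 := by
  simp [Module.Basis.coord_apply, Module.Basis.repr_self, Finsupp.single_apply, (h.symm : j ≠ i)]

lemma cM_hM : (cM e).comp (hM e) = LinearMap.id := by
  refine LinearMap.ext fun x => funext fun j => ?_
  simp only [LinearMap.comp_apply, hM_apply, LinearMap.id_apply, cM, LinearMap.pi_apply,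
    map_sum, map_smul]
  fin_cases j <;>
    simp [bv, Fin.sum_univ_three, expand_wedge, a2_apply, coord_self, coord_ne, smul_eq_mul]

lemma wedge_swap (x y : M) :
    wedge (R := R) 2 ![y, x] = - wedge 2 ![x, y] := by
  have h : (![x, y] : Fin 2 → M) ∘ (Equiv.swap (0 : Fin 2) 1) = ![y, x] := by
    funext k; fin_cases k <;> simp [Equiv.swap_apply_def]
  have h2 := AlternatingMap.map_swap (W R M 2) ![x, y] (show (0 : Fin 2) ≠ 1 by decide)
  rw [h] at h2
  simpa [W_apply] using h2

lemma neg_one_smul_wedge (x y : M) :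
    (-1 : R) • wedge (R := R) 2 ![x, y] = wedge 2 ![y, x] := by
  rw [wedge_swap x y]
  module

lemma hM_cM_pair (a b : Fin 3) (hab : a ≠ b) :
    hM e (cM e (wedge 2 ![e a, e b])) = wedge 2 ![e a, e b] := by
  fin_cases a <;> fin_cases b <;>
    first
    | exact absurd rfl hab
    | (simp [hM_apply, cM, LinearMap.pi_apply, bv, Fin.sum_univ_three, expand_wedge, a2_apply,
        coord_self, coord_ne, neg_one_smul_wedge])

lemma hM_cM : (hM e).comp (cM e) = LinearMap.id := by
  refine ext_on_power fun v => ?_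
  have H : ((hM e).comp (cM e)).compAlternatingMap (W R M 2)
      = (LinearMap.id : (⋀[R]^2 M) →ₗ[R] _).compAlternatingMap (W R M 2) := by
    refine Module.Basis.ext_alternating e fun i hinj => ?_
    have hne : i 0 ≠ i 1 := fun h => by simpa using hinj h
    have hv : (fun k => e (i k)) = ![e (i 0), e (i 1)] := by
      funext k; fin_cases k <;> rfl
    simp only [LinearMap.compAlternatingMap_apply, hv, W_apply, LinearMap.id_apply,
      LinearMap.comp_apply]
    exact hM_cM_pair e (i 0) (i 1) hne
  have := AlternatingMap.congr_fun H v
  simpa [W_apply] using this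

/-- Module.Basis of `⋀²M`. -/
noncomputable def b2 : Module.Basis (Fin 3) R (⋀[R]^2 M) :=
  Module.Basis.ofEquivFun (LinearEquiv.ofLinear (cM e) (hM e) (cM_hM e) (hM_cM e))

lemma coe_b2 : ⇑(b2 e) = bv e := by
  classical
  funext i
  rw [b2, Module.Basis.coe_ofEquivFun]
  show hM e (Pi.single i 1) = bv e i
  fin_cases i <;> simp [hM_apply, Fin.sum_univ_three, Pi.single_apply]

end StmtAux

set_option maxHeartbeats 1000000 in
open StmtAux in
/-- For `M` free of rank `3` there is an isomorphism `⋀³(⋀²M) ≅ (⋀³M)⊗²` sending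
`(e₁∧e₂)∧(e₂∧e₃)∧(e₃∧e₁)` to `(e₁∧e₂∧e₃)⊗(e₁∧e₂∧e₃)`. -/
theorem stmt_6 {R M : Type*} [CommRing R] [AddCommGroup M] [Module R M]
    (e : Module.Basis (Fin 3) R M) :
    ∃ f : (⋀[R]^3 (⋀[R]^2 M)) ≃ₗ[R] ((⋀[R]^3 M) ⊗[R] (⋀[R]^3 M)),
      f (wedge 3 ![wedge 2 ![e 0, e 1], wedge 2 ![e 1, e 2], wedge 2 ![e 2, e 0]])
        = (wedge 3 ![e 0, e 1, e 2]) ⊗ₜ[R] (wedge 3 ![e 0, e 1, e 2]) := by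
  classical
  set w : ⋀[R]^3 M := wedge 3 ⇑e with hw
  set Ω : ⋀[R]^3 (⋀[R]^2 M) := wedge 3 ⇑(b2 e) with hΩ
  set φ : (⋀[R]^3 M) →ₗ[R] R := expand e.det with hφ
  set D : (⋀[R]^3 (⋀[R]^2 M)) →ₗ[R] R := expand (b2 e).det with hD
  have hφw : φ w = 1 := by rw [hφ, hw, expand_wedge, Module.Basis.det_self]
  have hDΩ : D Ω = 1 := by rw [hD, hΩ, expand_wedge, Module.Basis.det_self]
  -- the forward and backward maps
  set F : (⋀[R]^3 (⋀[R]^2 M)) →ₗ[R] ((⋀[R]^3 M) ⊗[R] (⋀[R]^3 M)) :=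
    (LinearMap.toSpanSingleton R _ (w ⊗ₜ[R] w)).comp D with hF
  set G : ((⋀[R]^3 M) ⊗[R] (⋀[R]^3 M)) →ₗ[R] (⋀[R]^3 (⋀[R]^2 M)) :=
    TensorProduct.lift (((LinearMap.mul R R).compl₁₂ φ φ).compr₂
      (LinearMap.toSpanSingleton R _ Ω)) with hG
  have hGtmul : ∀ u v : ⋀[R]^3 M, G (u ⊗ₜ[R] v) = (φ u * φ v) • Ω := by
    intro u v
    simp [hG, LinearMap.toSpanSingleton_apply]
  have hFapp : ∀ x, F x = D x • (w ⊗ₜ[R] w) := by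
    intro x; simp [hF, LinearMap.toSpanSingleton_apply]
  -- u = φ u • w for all u
  have hspan : ∀ u : ⋀[R]^3 M, φ u • w = u := by
    intro u
    have : (LinearMap.toSpanSingleton R _ w).comp φ = LinearMap.id := by
      refine ext_on_power fun v => ?_
      rw [LinearMap.comp_apply, hφ, expand_wedge, LinearMap.toSpanSingleton_apply,
        LinearMap.id_apply]
      rw [hw, ← W_apply, ← W_apply, key e (W R M 3) v]
    simpa [LinearMap.toSpanSingleton_apply] using LinearMap.congr_fun this u
  have hspan2 : ∀ x : ⋀[R]^3 (⋀[R]^2 M), D x • Ω = x := by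
    intro x
    have : (LinearMap.toSpanSingleton R _ Ω).comp D = LinearMap.id := by
      refine ext_on_power fun v => ?_
      rw [LinearMap.comp_apply, hD, expand_wedge, LinearMap.toSpanSingleton_apply,
        LinearMap.id_apply]
      rw [hΩ, ← W_apply, ← W_apply, key (b2 e) (W R (⋀[R]^2 M) 3) v]
    simpa [LinearMap.toSpanSingleton_apply] using LinearMap.congr_fun this x
  have h1 : F.comp G = LinearMap.id := by
    refine TensorProduct.ext' fun u v => ?_
    rw [LinearMap.comp_apply, hGtmul, map_smul, hFapp, hDΩ, one_smul, LinearMap.id_apply,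
      mul_smul]
    conv_rhs => rw [← hspan u, ← hspan v, ← smul_tmul', tmul_smul]
  have h2 : G.comp F = LinearMap.id := by
    refine LinearMap.ext fun x => ?_
    rw [LinearMap.comp_apply, hFapp, map_smul, hGtmul, hφw, one_mul, one_smul,
      LinearMap.id_apply, hspan2]
  refine ⟨LinearEquiv.ofLinear F G h1 h2, ?_⟩
  have hx : wedge 3 ![wedge 2 ![e 0, e 1], wedge 2 ![e 1, e 2], wedge 2 ![e 2, e 0]] = Ω := by
    rw [hΩ]
    congr 1
    funext i
    rw [coe_b2]
    fin_cases i <;> rfl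
  have hwx : wedge 3 ![e 0, e 1, e 2] = w := by
    rw [hw]; congr 1; funext i; fin_cases i <;> rfl
  rw [hx, hwx, LinearEquiv.ofLinear_apply, hFapp, hDΩ, one_smul]
end

section
/- The map s : M⊗⁶ → (⋀³M)⊗² given by x⊗x'⊗y⊗y'⊗z⊗z' ↦ (x∧x'∧y')⊗(y∧z∧z') − (x∧x'∧y)⊗(y'∧z∧z') satisfies s((x∧x')⊗(y∧y')⊗(z∧z')) = −s((y∧y')⊗(x∧x')⊗(z∧z')) for all x,x',y,y',z,z' ∈ M, where M is a free R-module of rank 3. -/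
open ExteriorAlgebra TensorProduct

lemma iMulti_eq_det_smul {R M : Type*} [CommRing R] [AddCommGroup M] [Module R M]
    (e : Module.Basis (Fin 3) R M) (v : Fin 3 → M) :
    ExteriorAlgebra.ιMulti R 3 v
      = e.det v • ExteriorAlgebra.ιMulti R 3 ⇑e := by
  have : ExteriorAlgebra.ιMulti R 3 (M := M)
      = (LinearMap.toSpanSingleton R _ (ExteriorAlgebra.ιMulti R 3 ⇑e)).compAlternatingMap
          e.det := by
    refine Module.Basis.ext_alternating e fun w hw => ?_
    have hw' : Function.Bijective w := (Finite.injective_iff_bijective).1 hw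
    set σ : Equiv.Perm (Fin 3) := Equiv.ofBijective w hw'
    have hval : (fun i => e (w i)) = ⇑e ∘ σ := rfl
    rw [hval]
    rw [AlternatingMap.map_perm, LinearMap.compAlternatingMap_apply,
      AlternatingMap.map_perm, Module.Basis.det_self]
    simp [LinearMap.toSpanSingleton_apply]
  conv_lhs => rw [this]
  simp [LinearMap.toSpanSingleton_apply]

lemma wedge_eq_det_smul {R M : Type*} [CommRing R] [AddCommGroup M] [Module R M]
    (e : Module.Basis (Fin 3) R M) (v : Fin 3 → M) :
    wedge (R := R) 3 v = e.det v • wedge (R := R) 3 ⇑e := by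
  apply Subtype.ext
  exact iMulti_eq_det_smul e v

lemma det_identity {R M : Type*} [CommRing R] [AddCommGroup M] [Module R M]
    (e : Module.Basis (Fin 3) R M) (x x' y y' z z' : M) :
    e.det ![x, x', y'] * e.det ![y, z, z'] - e.det ![x, x', y] * e.det ![y', z, z']
      = -(e.det ![y, y', x'] * e.det ![x, z, z']
          - e.det ![y, y', x] * e.det ![x', z, z']) := by
  simp only [Module.Basis.det_apply, Matrix.det_fin_three, Module.Basis.toMatrix_apply,
    Matrix.cons_val_zero, Matrix.cons_val_one, Matrix.head_cons, Matrix.cons_val_two,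
    Matrix.tail_cons]
  ring

set_option synthInstance.maxHeartbeats 1000000 in
set_option maxHeartbeats 1000000 in
/-- The map `s : M⊗⁶ → (⋀³M)⊗²`,
`x⊗x'⊗y⊗y'⊗z⊗z' ↦ (x∧x'∧y')⊗(y∧z∧z') − (x∧x'∧y)⊗(y'∧z∧z')`, is alternating in the sense
that `s((x∧x')⊗(y∧y')⊗(z∧z')) = −s((y∧y')⊗(x∧x')⊗(z∧z'))` for `M` free of rank 3. -/
theorem stmt_8 {R M : Type*} [CommRing R] [AddCommGroup M] [Module R M]
    (e : Module.Basis (Fin 3) R M) (x x' y y' z z' : M) :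
    (wedge (R := R) 3 ![x, x', y']) ⊗ₜ[R] (wedge (R := R) 3 ![y, z, z'])
        - (wedge (R := R) 3 ![x, x', y]) ⊗ₜ[R] (wedge (R := R) 3 ![y', z, z'])
      = -((wedge (R := R) 3 ![y, y', x']) ⊗ₜ[R] (wedge (R := R) 3 ![x, z, z'])
          - (wedge (R := R) 3 ![y, y', x]) ⊗ₜ[R] (wedge (R := R) 3 ![x', z, z'])) := by
  rw [wedge_eq_det_smul e ![x, x', y'], wedge_eq_det_smul e ![y, z, z'],
    wedge_eq_det_smul e ![x, x', y], wedge_eq_det_smul e ![y', z, z'],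
    wedge_eq_det_smul e ![y, y', x'], wedge_eq_det_smul e ![x, z, z'],
    wedge_eq_det_smul e ![y, y', x], wedge_eq_det_smul e ![x', z, z']]
  set w := wedge (R := R) 3 ⇑e
  simp only [tmul_smul, ← smul_tmul', smul_smul]
  have h := det_identity e x x' y y' z z'
  match_scalars
  linear_combination h
end

section
/- Let B be the free R-algebra with basis 1, i, j, k and multiplication i² = ui − bc, j² = vj − ac, k² = wk − ab, jk = a(u−i), ki = b(v−j), ij = c(w−k), kj = −vw + ai + wj + vk, ik = −uw + wi + bj + uk, ji = −uv + vi + uj + ck, for a,b,c,u,v,w ∈ R. Then B is an associative R-algebra. -/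
/-- Multiplication on the free module `R⁴` with basis `1, i, j, k` given by the table
`i² = ui − bc`, `j² = vj − ac`, `k² = wk − ab`, `jk = a(u−i)`, `ki = b(v−j)`, `ij = c(w−k)`,
`kj = −vw + ai + wj + vk`, `ik = −uw + wi + bj + uk`, `ji = −uv + vi + uj + ck`. -/
def qMul {R : Type*} [CommRing R] (a b c u v w : R) (x y : Fin 4 → R) : Fin 4 → R :=
  ![x 0 * y 0 - b * c * (x 1 * y 1) + c * w * (x 1 * y 2) - u * w * (x 1 * y 3)
      - u * v * (x 2 * y 1) - a * c * (x 2 * y 2) + a * u * (x 2 * y 3)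
      + b * v * (x 3 * y 1) - v * w * (x 3 * y 2) - a * b * (x 3 * y 3),
    x 0 * y 1 + x 1 * y 0 + u * (x 1 * y 1) + w * (x 1 * y 3) + v * (x 2 * y 1)
      - a * (x 2 * y 3) + a * (x 3 * y 2),
    x 0 * y 2 + x 2 * y 0 + b * (x 1 * y 3) + u * (x 2 * y 1) + v * (x 2 * y 2)
      - b * (x 3 * y 1) + w * (x 3 * y 2),
    x 0 * y 3 + x 3 * y 0 - c * (x 1 * y 2) + u * (x 1 * y 3) + c * (x 2 * y 1)
      + v * (x 3 * y 2) + w * (x 3 * y 3)]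

/-- The free module `R⁴` with the multiplication table of the even Clifford algebra of the
ternary form `ax² + by² + cz² + uyz + vxz + wxy` is an associative unital `R`-algebra. -/
theorem stmt_9 {R : Type*} [CommRing R] (a b c u v w : R) :
    (∀ x y z : Fin 4 → R, qMul a b c u v w (qMul a b c u v w x y) z
        = qMul a b c u v w x (qMul a b c u v w y z)) ∧
    (∀ x : Fin 4 → R, qMul a b c u v w ![1, 0, 0, 0] x = x) ∧
    (∀ x : Fin 4 → R, qMul a b c u v w x ![1, 0, 0, 0] = x) ∧
    (∀ x y z : Fin 4 → R, qMul a b c u v w (x + y) z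
        = qMul a b c u v w x z + qMul a b c u v w y z) ∧
    (∀ x y z : Fin 4 → R, qMul a b c u v w x (y + z)
        = qMul a b c u v w x y + qMul a b c u v w x z) ∧
    (∀ (r : R) (x y : Fin 4 → R), qMul a b c u v w (r • x) y = r • qMul a b c u v w x y) ∧
    (∀ (r : R) (x y : Fin 4 → R), qMul a b c u v w x (r • y) = r • qMul a b c u v w x y) := by
  refine ⟨?_, ?_, ?_, ?_, ?_, ?_, ?_⟩
  · intro x y z
    funext m
    fin_cases m <;> simp [qMul] <;> ring
  · intro x
    funext m
    fin_cases m <;> simp [qMul]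
  · intro x
    funext m
    fin_cases m <;> simp [qMul]
  · intro x y z
    funext m
    fin_cases m <;> simp [qMul] <;> ring
  · intro x y z
    funext m
    fin_cases m <;> simp [qMul] <;> ring
  · intro r x y
    funext m
    fin_cases m <;> simp [qMul] <;> ring
  · intro r x y
    funext m
    fin_cases m <;> simp [qMul] <;> ring
end

section
/- Let B be the free quaternion ring over R with basis 1, i, j, k associated to the ternary quadratic form q(x,y,z) = ax² + by² + cz² + uyz + vxz + wxy (multiplication rules i² = ui − bc, jk = a(u−i), etc.). Then the map fixing R and sending i ↦ u − i, j ↦ v − j, k ↦ w − k extends R-linearly to a standard involution on B. -/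
/-- On the free quaternion ring with good basis `1, i, j, k` associated to the form
`ax² + by² + cz² + uyz + vxz + wxy`, the map `i ↦ u−i`, `j ↦ v−j`, `k ↦ w−k` extends
`R`-linearly to a standard involution. -/
theorem stmt_10 {R B : Type*} [CommRing R] [Ring B] [Algebra R B]
    (a b c u v w : R) (i j k : B)
    (bB : Module.Basis (Fin 4) R B) (hb : ⇑bB = ![1, i, j, k])
    (hii : i * i = u • i - algebraMap R B (b * c))
    (hjj : j * j = v • j - algebraMap R B (a * c))
    (hkk : k * k = w • k - algebraMap R B (a * b))
    (hjk : j * k = a • (algebraMap R B u - i))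
    (hki : k * i = b • (algebraMap R B v - j))
    (hij : i * j = c • (algebraMap R B w - k))
    (hkj : k * j = algebraMap R B (-(v * w)) + a • i + w • j + v • k)
    (hik : i * k = algebraMap R B (-(u * w)) + w • i + b • j + u • k)
    (hji : j * i = algebraMap R B (-(u * v)) + v • i + u • j + c • k) :
    ∃ σ : B →ₗ[R] B,
      σ 1 = 1 ∧
      σ i = algebraMap R B u - i ∧
      σ j = algebraMap R B v - j ∧
      σ k = algebraMap R B w - k ∧
      (∀ x y : B, σ (x * y) = σ y * σ x) ∧
      (∀ x : B, σ (σ x) = x) ∧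
      (∀ x : B, ∃ r : R, x * σ x = algebraMap R B r) := by
  have h0 : bB 0 = 1 := by rw [show bB 0 = (⇑bB) 0 from rfl, hb]; rfl
  have h1 : bB 1 = i := by rw [show bB 1 = (⇑bB) 1 from rfl, hb]; rfl
  have h2 : bB 2 = j := by rw [show bB 2 = (⇑bB) 2 from rfl, hb]; rfl
  have h3 : bB 3 = k := by rw [show bB 3 = (⇑bB) 3 from rfl, hb]; rfl
  have h0' : bB ⟨0, by omega⟩ = 1 := h0
  have h1' : bB ⟨1, by omega⟩ = i := h1
  have h2' : bB ⟨2, by omega⟩ = j := h2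
  have h3' : bB ⟨3, by omega⟩ = k := h3
  set f : Fin 4 → B := ![1, algebraMap R B u - i, algebraMap R B v - j,
    algebraMap R B w - k] with hf
  set σ : B →ₗ[R] B := bB.constr R f with hσ
  have hσ0 : σ (1:B) = 1 := by
    have h := bB.constr_basis R f 0; rw [h0] at h; exact h.trans rfl
  have hσi : σ i = algebraMap R B u - i := by
    have h := bB.constr_basis R f 1; rw [h1] at h; exact h.trans rfl
  have hσj : σ j = algebraMap R B v - j := by
    have h := bB.constr_basis R f 2; rw [h2] at h; exact h.trans rfl
  have hσk : σ k = algebraMap R B w - k := by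
    have h := bB.constr_basis R f 3; rw [h3] at h; exact h.trans rfl
  have hσalg : ∀ r : R, σ (algebraMap R B r) = algebraMap R B r := by
    intro r
    rw [Algebra.algebraMap_eq_smul_one, map_smul, hσ0]
  have hmul : ∀ x y : B, σ (x * y) = σ y * σ x := by
    have key : (LinearMap.mul R B).compr₂ σ
        = (LinearMap.mul R B).flip.compl₁₂ σ σ := by
      apply bB.ext; intro m; apply bB.ext; intro n
      fin_cases m <;> fin_cases n <;>
        (simp only [LinearMap.compr₂_apply, LinearMap.compl₁₂_apply,
          LinearMap.mul_apply', LinearMap.flip_apply, LinearMap.sub_apply,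
          LinearMap.add_apply, LinearMap.smul_apply, Module.End.one_apply, Fin.isValue, h0, h1, h2, h3, h0', h1', h2', h3',
          hii, hjj, hkk, hjk, hki, hij, hkj, hik, hji, map_add, map_sub, map_smul,
          hσ0, hσi, hσj, hσk, one_mul, mul_one, Algebra.algebraMap_eq_smul_one,
          sub_mul, mul_sub, add_mul, mul_add, smul_mul_assoc, mul_smul_comm,
          smul_sub, smul_add, smul_smul];
         try module)
    intro x y
    have := LinearMap.congr_fun (LinearMap.congr_fun key x) y
    simpa using this
  have hinv : ∀ x : B, σ (σ x) = x := by
    have key : σ ∘ₗ σ = LinearMap.id := by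
      apply bB.ext; intro m
      fin_cases m <;>
        simp [h0, h1, h2, h3, h0', h1', h2', h3', hσ0, hσi, hσj, hσk, hσalg]
    intro x
    exact LinearMap.congr_fun key x
  refine ⟨σ, hσ0, hσi, hσj, hσk, hmul, hinv, ?_⟩
  intro x
  set x0 := bB.repr x 0 with hx0
  set x1 := bB.repr x 1 with hx1
  set x2 := bB.repr x 2 with hx2
  set x3 := bB.repr x 3 with hx3
  have hx : x0 • (1:B) + x1 • i + x2 • j + x3 • k = x := by
    have := bB.sum_repr x
    rw [Fin.sum_univ_four, h0, h1, h2, h3] at this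
    exact this
  refine ⟨x0*x0 + u*(x0*x1) + v*(x0*x2) + w*(x0*x3) + b*c*(x1*x1) + a*c*(x2*x2)
    + a*b*(x3*x3) + (u*v - c*w)*(x1*x2) + (u*w - b*v)*(x1*x3)
    + (v*w - a*u)*(x2*x3), ?_⟩
  rw [← hx]
  simp only [map_add, map_smul, hσ0, hσi, hσj, hσk, one_mul, mul_one,
    Algebra.algebraMap_eq_smul_one, mul_sub, sub_mul, mul_add, add_mul,
    smul_mul_assoc, mul_smul_comm, smul_sub, smul_add, smul_smul,
    hii, hjj, hkk, hjk, hki, hij, hkj, hik, hji]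
  module
end

section
/- Let B = R ⊕ M be an exceptional ring, so that xy = t(x)·y for all x, y ∈ M, where t : M → R is linear. Then for ξ = r + x with r ∈ R, x ∈ M, the element ξ satisfies ξ² − (2r + t(x))ξ + (r² + r·t(x)) = 0; i.e. the map r + x ↦ r + t(x) − x is a standard involution on B with trd(r+x) = 2r + t(x) and nrd(r+x) = r² + r·t(x). -/
/-- If `B = R ⊕ M` is an exceptional ring, with `xy = t(x)·y` for `x, y ∈ M`, then
`ξ = r + x` satisfies `ξ² − (2r + t(x))ξ + (r² + r·t(x)) = 0`; indeed `r + x ↦ r + t(x) − x`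
is a standard involution with `trd(r+x) = 2r + t(x)` and `nrd(r+x) = r² + r·t(x)`. -/
theorem stmt_12 {R B : Type*} [CommRing R] [Ring B] [Algebra R B]
    (M : Submodule R B) (t : M →ₗ[R] R)
    (hmul : ∀ x y : M, (x : B) * (y : B) = t x • (y : B))
    (r : R) (x : M) :
    (algebraMap R B r + x) ^ 2 - (2 * r + t x) • (algebraMap R B r + x)
        + algebraMap R B (r ^ 2 + r * t x) = 0 ∧
    (algebraMap R B r + x) + (algebraMap R B (r + t x) - x)
        = algebraMap R B (2 * r + t x) ∧
    (algebraMap R B r + x) * (algebraMap R B (r + t x) - x)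
        = algebraMap R B (r ^ 2 + r * t x) := by
  have hxx : (x : B) * (x : B) = algebraMap R B (t x) * x := by
    rw [hmul x x, Algebra.smul_def]
  have ha : algebraMap R B r * (x : B) = x * algebraMap R B r := Algebra.commutes r (x : B)
  have hs : algebraMap R B (t x) * (x : B) = x * algebraMap R B (t x) := Algebra.commutes _ (x : B)
  have hsa : algebraMap R B (t x) * algebraMap R B r = algebraMap R B r * algebraMap R B (t x) := by
    rw [← map_mul, ← map_mul, mul_comm]
  refine ⟨?_, ?_, ?_⟩
  · simp only [map_add, map_mul, map_pow, Algebra.smul_def, map_ofNat, sq, mul_add, add_mul,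
      sub_eq_add_neg, neg_add, hxx, ← ha, ← hs, hsa, two_mul]
    abel
  · simp only [map_add, map_mul, map_ofNat, two_mul]
    abel
  · simp only [map_add, map_mul, map_pow, mul_add, add_mul, mul_sub, sub_mul, hxx, ← ha, ← hs, sq]
    abel
end

section
/- Let B be the free R-algebra of rank 4 with good basis 1, i, j, k and multiplication laws i² = ui−bc, j² = vj−ac, k² = wk−ab, jk = a·ī + v'k, ki = b·j̄ + w'i, ij = c·k̄ + u'j (and the products determined by the standard involution). Then associativity of B forces a·u' = a·v' = a·w' = b·u' = b·v' = b·w' = c·u' = c·v' = c·w' = 0 and (u'−u)u' = (u'−u)v' = (u'−u)w' = (v'−v)u' = (v'−v)v' = (v'−v)w' = (w'−w)u' = (w'−w)v' = (w'−w)w' = 0. -/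
/-- Associativity constraints on the universal multiplication laws (U): for a free rank-4
algebra with standard involution and good basis `1, i, j, k`, the parameters satisfy
`(a,b,c)ᵗ·(u',v',w') = 0` and `(u'−u, v'−v, w'−w)ᵗ·(u',v',w') = 0`. -/
theorem stmt_14 {R B : Type*} [CommRing R] [Ring B] [Algebra R B]
    (a b c u v w u' v' w' : R) (i j k : B)
    (bB : Module.Basis (Fin 4) R B) (hb : ⇑bB = ![1, i, j, k])
    (σ : B →ₗ[R] B) (hσ1 : σ 1 = 1)
    (hσi : σ i = algebraMap R B u - i)
    (hσj : σ j = algebraMap R B v - j)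
    (hσk : σ k = algebraMap R B w - k)
    (hanti : ∀ x y : B, σ (x * y) = σ y * σ x)
    (hinv : ∀ x : B, σ (σ x) = x)
    (hstd : ∀ x : B, ∃ r : R, x * σ x = algebraMap R B r)
    (hii : i * i = u • i - algebraMap R B (b * c))
    (hjj : j * j = v • j - algebraMap R B (a * c))
    (hkk : k * k = w • k - algebraMap R B (a * b))
    (hjk : j * k = a • (algebraMap R B u - i) + v' • k)
    (hki : k * i = b • (algebraMap R B v - j) + w' • i)
    (hij : i * j = c • (algebraMap R B w - k) + u' • j) :
    (a * u' = 0 ∧ a * v' = 0 ∧ a * w' = 0) ∧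
    (b * u' = 0 ∧ b * v' = 0 ∧ b * w' = 0) ∧
    (c * u' = 0 ∧ c * v' = 0 ∧ c * w' = 0) ∧
    ((u' - u) * u' = 0 ∧ (u' - u) * v' = 0 ∧ (u' - u) * w' = 0) ∧
    ((v' - v) * u' = 0 ∧ (v' - v) * v' = 0 ∧ (v' - v) * w' = 0) ∧
    ((w' - w) * u' = 0 ∧ (w' - w) * v' = 0 ∧ (w' - w) * w' = 0) := by
  -- Linear independence of 1, i, j, k: equal combinations have equal coefficients.
  have indep : ∀ p q r s p' q' r' s' : R,
      p • (1:B) + q • i + r • j + s • k = p' • (1:B) + q' • i + r' • j + s' • k →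
      p = p' ∧ q = q' ∧ r = r' ∧ s = s' := by
    intro p q r s p' q' r' s' h
    have hli := bB.linearIndependent
    rw [Fintype.linearIndependent_iff] at hli
    have hz : ∑ t : Fin 4, (![p - p', q - q', r - r', s - s'] t) • bB t = 0 := by
      rw [hb]
      simp only [Fin.sum_univ_four, Matrix.cons_val_zero, Matrix.cons_val_one, Matrix.head_cons,
        Matrix.cons_val_two, Matrix.tail_cons, Matrix.cons_val_three]
      rw [show (p - p') • (1:B) + (q - q') • i + (r - r') • j + (s - s') • k =
        (p • (1:B) + q • i + r • j + s • k) - (p' • (1:B) + q' • i + r' • j + s' • k) by module]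
      rw [h, sub_self]
    have hze := hli _ hz
    refine ⟨?_, ?_, ?_, ?_⟩
    · have := hze 0; simpa [sub_eq_zero] using this
    · have := hze 1; simpa [sub_eq_zero] using this
    · have := hze 2; simpa [sub_eq_zero] using this
    · have := hze 3; simpa [sub_eq_zero] using this
  -- σ fixes scalars
  have hσs : ∀ r : R, σ (algebraMap R B r) = algebraMap R B r := by
    intro r
    rw [Algebra.algebraMap_eq_smul_one, map_smul, hσ1]
  -- derived products
  have hkj2 : k * j = (w*v' + (-1)*v*w) • (1:B) + (a) • i + (w) • j + ((-1)*v' + v) • k := by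
    have h0 : k * j = σ (σ j * σ k) := by rw [← hanti, hinv]
    have h1 : σ j * σ k = (v*w + a*u) • (1:B) + (-a) • i + (-w) • j + (v' - v) • k := by
      rw [hσj, hσk]
      simp only [Algebra.algebraMap_eq_smul_one, sub_mul, mul_sub, smul_mul_assoc,
        mul_smul_comm, one_mul, mul_one, hjk, smul_add, smul_sub, smul_smul]
      module
    rw [h0, h1]
    simp only [map_add, map_sub, map_smul, map_neg, hσ1, hσi, hσj, hσk,
      Algebra.algebraMap_eq_smul_one]
    module
  have hik2 : i * k = (u*w' + (-1)*u*w) • (1:B) + ((-1)*w' + w) • i + (b) • j + (u) • k := by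
    have h0 : i * k = σ (σ k * σ i) := by rw [← hanti, hinv]
    have h1 : σ k * σ i = (u*w + b*v) • (1:B) + (w' - w) • i + (-b) • j + (-u) • k := by
      rw [hσk, hσi]
      simp only [Algebra.algebraMap_eq_smul_one, sub_mul, mul_sub, smul_mul_assoc,
        mul_smul_comm, one_mul, mul_one, hki, smul_add, smul_sub, smul_smul]
      module
    rw [h0, h1]
    simp only [map_add, map_sub, map_smul, map_neg, hσ1, hσi, hσj, hσk,
      Algebra.algebraMap_eq_smul_one]
    module
  have hji2 : j * i = (v*u' + (-1)*u*v) • (1:B) + (v) • i + ((-1)*u' + u) • j + (c) • k := by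
    have h0 : j * i = σ (σ i * σ j) := by rw [← hanti, hinv]
    have h1 : σ i * σ j = (u*v + c*w) • (1:B) + (-v) • i + (u' - u) • j + (-c) • k := by
      rw [hσi, hσj]
      simp only [Algebra.algebraMap_eq_smul_one, sub_mul, mul_sub, smul_mul_assoc,
        mul_smul_comm, one_mul, mul_one, hij, smul_add, smul_sub, smul_smul]
      module
    rw [h0, h1]
    simp only [map_add, map_sub, map_smul, map_neg, hσ1, hσi, hσj, hσk,
      Algebra.algebraMap_eq_smul_one]
    module
  have hLiij : (i * i) * j = (c*u*w) • (1:B) + (0:R) • i + (u*u' + (-1)*b*c) • j + ((-1)*c*u) • k := by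
    simp only [hii, hjj, hkk, hij, hjk, hki, hkj2, hik2, hji2, Algebra.algebraMap_eq_smul_one, mul_add, add_mul, mul_sub, sub_mul, smul_mul_assoc, mul_smul_comm, smul_smul, one_mul, mul_one, smul_add, smul_sub]; module
  have hRiij : i * (i * j) = (c*w*u' + (-1)*c*u*w' + c*u*w) • (1:B) + (c*w') • i + (u'*u' + (-1)*b*c) • j + ((-1)*c*u' + (-1)*c*u) • k := by
    simp only [hii, hjj, hkk, hij, hjk, hki, hkj2, hik2, hji2, Algebra.algebraMap_eq_smul_one, mul_add, add_mul, mul_sub, sub_mul, smul_mul_assoc, mul_smul_comm, smul_smul, one_mul, mul_one, smul_add, smul_sub]; module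
  obtain ⟨eiij1, eiij2, eiij3, eiij4⟩ := indep _ _ _ _ _ _ _ _ (hLiij.symm.trans ((mul_assoc i i j).trans hRiij))
  have hLijj : (i * j) * j = ((-1)*c*w*v' + c*v*w + (-1)*a*c*u') • (1:B) + ((-1)*a*c) • i + (v*u') • j + (c*v' + (-1)*c*v) • k := by
    simp only [hii, hjj, hkk, hij, hjk, hki, hkj2, hik2, hji2, Algebra.algebraMap_eq_smul_one, mul_add, add_mul, mul_sub, sub_mul, smul_mul_assoc, mul_smul_comm, smul_smul, one_mul, mul_one, smul_add, smul_sub]; module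
  have hRijj : i * (j * j) = (c*v*w) • (1:B) + ((-1)*a*c) • i + (v*u') • j + ((-1)*c*v) • k := by
    simp only [hii, hjj, hkk, hij, hjk, hki, hkj2, hik2, hji2, Algebra.algebraMap_eq_smul_one, mul_add, add_mul, mul_sub, sub_mul, smul_mul_assoc, mul_smul_comm, smul_smul, one_mul, mul_one, smul_add, smul_sub]; module
  obtain ⟨eijj1, eijj2, eijj3, eijj4⟩ := indep _ _ _ _ _ _ _ _ (hLijj.symm.trans ((mul_assoc i j j).trans hRijj))
  have hLiik : (i * i) * k = (u*u*w' + (-1)*u*u*w) • (1:B) + ((-1)*u*w' + u*w) • i + (b*u) • j + (u*u + (-1)*b*c) • k := by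
    simp only [hii, hjj, hkk, hij, hjk, hki, hkj2, hik2, hji2, Algebra.algebraMap_eq_smul_one, mul_add, add_mul, mul_sub, sub_mul, smul_mul_assoc, mul_smul_comm, smul_smul, one_mul, mul_one, smul_add, smul_sub]; module
  have hRiik : i * (i * k) = (u*u*w' + (-1)*u*u*w + b*c*w') • (1:B) + ((-1)*u*w' + u*w) • i + (b*u' + b*u) • j + (u*u + (-1)*b*c) • k := by
    simp only [hii, hjj, hkk, hij, hjk, hki, hkj2, hik2, hji2, Algebra.algebraMap_eq_smul_one, mul_add, add_mul, mul_sub, sub_mul, smul_mul_assoc, mul_smul_comm, smul_smul, one_mul, mul_one, smul_add, smul_sub]; module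
  obtain ⟨eiik1, eiik2, eiik3, eiik4⟩ := indep _ _ _ _ _ _ _ _ (hLiik.symm.trans ((mul_assoc i i k).trans hRiik))
  have hLikk : (i * k) * k = ((-1)*u*w'*w' + 2*u*w*w' + (-1)*u*w*w) • (1:B) + (w'*w' + (-2)*w*w' + w*w + (-1)*a*b) • i + ((-1)*b*w' + b*w) • j + (u*w + b*v') • k := by
    simp only [hii, hjj, hkk, hij, hjk, hki, hkj2, hik2, hji2, Algebra.algebraMap_eq_smul_one, mul_add, add_mul, mul_sub, sub_mul, smul_mul_assoc, mul_smul_comm, smul_smul, one_mul, mul_one, smul_add, smul_sub]; module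
  have hRikk : i * (k * k) = (u*w*w' + (-1)*u*w*w) • (1:B) + ((-1)*w*w' + w*w + (-1)*a*b) • i + (b*w) • j + (u*w) • k := by
    simp only [hii, hjj, hkk, hij, hjk, hki, hkj2, hik2, hji2, Algebra.algebraMap_eq_smul_one, mul_add, add_mul, mul_sub, sub_mul, smul_mul_assoc, mul_smul_comm, smul_smul, one_mul, mul_one, smul_add, smul_sub]; module
  obtain ⟨eikk1, eikk2, eikk3, eikk4⟩ := indep _ _ _ _ _ _ _ _ (hLikk.symm.trans ((mul_assoc i k k).trans hRikk))
  have hLjjk : (j * j) * k = (a*u*v) • (1:B) + ((-1)*a*v) • i + (0:R) • j + (v*v' + (-1)*a*c) • k := by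
    simp only [hii, hjj, hkk, hij, hjk, hki, hkj2, hik2, hji2, Algebra.algebraMap_eq_smul_one, mul_add, add_mul, mul_sub, sub_mul, smul_mul_assoc, mul_smul_comm, smul_smul, one_mul, mul_one, smul_add, smul_sub]; module
  have hRjjk : j * (j * k) = ((-1)*a*v*u' + a*u*v' + a*u*v) • (1:B) + ((-1)*a*v' + (-1)*a*v) • i + (a*u') • j + (v'*v' + (-1)*a*c) • k := by
    simp only [hii, hjj, hkk, hij, hjk, hki, hkj2, hik2, hji2, Algebra.algebraMap_eq_smul_one, mul_add, add_mul, mul_sub, sub_mul, smul_mul_assoc, mul_smul_comm, smul_smul, one_mul, mul_one, smul_add, smul_sub]; module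
  obtain ⟨ejjk1, ejjk2, ejjk3, ejjk4⟩ := indep _ _ _ _ _ _ _ _ (hLjjk.symm.trans ((mul_assoc j j k).trans hRjjk))
  have hLkkj : (k * k) * j = (w*w*v' + (-1)*v*w*w) • (1:B) + (a*w) • i + (w*w + (-1)*a*b) • j + ((-1)*w*v' + v*w) • k := by
    simp only [hii, hjj, hkk, hij, hjk, hki, hkj2, hik2, hji2, Algebra.algebraMap_eq_smul_one, mul_add, add_mul, mul_sub, sub_mul, smul_mul_assoc, mul_smul_comm, smul_smul, one_mul, mul_one, smul_add, smul_sub]; module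
  have hRkkj : k * (k * j) = (w*w*v' + (-1)*v*w*w + a*b*v') • (1:B) + (a*w' + a*w) • i + (w*w + (-1)*a*b) • j + ((-1)*w*v' + v*w) • k := by
    simp only [hii, hjj, hkk, hij, hjk, hki, hkj2, hik2, hji2, Algebra.algebraMap_eq_smul_one, mul_add, add_mul, mul_sub, sub_mul, smul_mul_assoc, mul_smul_comm, smul_smul, one_mul, mul_one, smul_add, smul_sub]; module
  obtain ⟨ekkj1, ekkj2, ekkj3, ekkj4⟩ := indep _ _ _ _ _ _ _ _ (hLkkj.symm.trans ((mul_assoc k k j).trans hRkkj))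
  have hLijk : (i * j) * k = (a*u*u' + a*b*c) • (1:B) + ((-1)*a*u') • i + (0:R) • j + (u'*v') • k := by
    simp only [hii, hjj, hkk, hij, hjk, hki, hkj2, hik2, hji2, Algebra.algebraMap_eq_smul_one, mul_add, add_mul, mul_sub, sub_mul, smul_mul_assoc, mul_smul_comm, smul_smul, one_mul, mul_one, smul_add, smul_sub]; module
  have hRijk : i * (j * k) = (u*v'*w' + (-1)*u*w*v' + a*b*c) • (1:B) + ((-1)*v'*w' + w*v') • i + (b*v') • j + (u*v') • k := by
    simp only [hii, hjj, hkk, hij, hjk, hki, hkj2, hik2, hji2, Algebra.algebraMap_eq_smul_one, mul_add, add_mul, mul_sub, sub_mul, smul_mul_assoc, mul_smul_comm, smul_smul, one_mul, mul_one, smul_add, smul_sub]; module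
  obtain ⟨eijk1, eijk2, eijk3, eijk4⟩ := indep _ _ _ _ _ _ _ _ (hLijk.symm.trans ((mul_assoc i j k).trans hRijk))
  have hLikj : (i * k) * j = (u*w*v' + (-1)*u*v*w + (-1)*c*w*w' + c*w*w + (-1)*a*b*c) • (1:B) + (a*u) • i + ((-1)*u'*w' + w*u' + u*w' + b*v) • j + ((-1)*u*v' + u*v + c*w' + (-1)*c*w) • k := by
    simp only [hii, hjj, hkk, hij, hjk, hki, hkj2, hik2, hji2, Algebra.algebraMap_eq_smul_one, mul_add, add_mul, mul_sub, sub_mul, smul_mul_assoc, mul_smul_comm, smul_smul, one_mul, mul_one, smul_add, smul_sub]; module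
  have hRikj : i * (k * j) = ((-1)*u*v'*w' + u*w*v' + u*v*w' + (-1)*u*v*w + c*w*w + (-1)*a*b*c) • (1:B) + (v'*w' + (-1)*v*w' + a*u) • i + (w*u' + (-1)*b*v' + b*v) • j + ((-1)*u*v' + u*v + (-1)*c*w) • k := by
    simp only [hii, hjj, hkk, hij, hjk, hki, hkj2, hik2, hji2, Algebra.algebraMap_eq_smul_one, mul_add, add_mul, mul_sub, sub_mul, smul_mul_assoc, mul_smul_comm, smul_smul, one_mul, mul_one, smul_add, smul_sub]; module
  obtain ⟨eikj1, eikj2, eikj3, eikj4⟩ := indep _ _ _ _ _ _ _ _ (hLikj.symm.trans ((mul_assoc i k j).trans hRikj))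
  have hLjik : (j * i) * k = (u*v*w' + (-1)*u*v*w + (-1)*a*u*u' + a*u*u + (-1)*a*b*c) • (1:B) + ((-1)*v*w' + v*w + a*u' + (-1)*a*u) • i + (b*v) • j + ((-1)*u'*v' + v*u' + u*v' + c*w) • k := by
    simp only [hii, hjj, hkk, hij, hjk, hki, hkj2, hik2, hji2, Algebra.algebraMap_eq_smul_one, mul_add, add_mul, mul_sub, sub_mul, smul_mul_assoc, mul_smul_comm, smul_smul, one_mul, mul_one, smul_add, smul_sub]; module
  have hRjik : j * (i * k) = ((-1)*v*u'*w' + v*w*u' + u*v*w' + (-1)*u*v*w + a*u*u + (-1)*a*b*c) • (1:B) + ((-1)*v*w' + v*w + (-1)*a*u) • i + (u'*w' + (-1)*w*u' + b*v) • j + (u*v' + (-1)*c*w' + c*w) • k := by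
    simp only [hii, hjj, hkk, hij, hjk, hki, hkj2, hik2, hji2, Algebra.algebraMap_eq_smul_one, mul_add, add_mul, mul_sub, sub_mul, smul_mul_assoc, mul_smul_comm, smul_smul, one_mul, mul_one, smul_add, smul_sub]; module
  obtain ⟨ejik1, ejik2, ejik3, ejik4⟩ := indep _ _ _ _ _ _ _ _ (hLjik.symm.trans ((mul_assoc j i k).trans hRjik))
  have hLjki : (j * k) * i = (b*v*v' + a*b*c) • (1:B) + (v'*w') • i + ((-1)*b*v') • j + (0:R) • k := by
    simp only [hii, hjj, hkk, hij, hjk, hki, hkj2, hik2, hji2, Algebra.algebraMap_eq_smul_one, mul_add, add_mul, mul_sub, sub_mul, smul_mul_assoc, mul_smul_comm, smul_smul, one_mul, mul_one, smul_add, smul_sub]; module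
  have hRjki : j * (k * i) = (v*u'*w' + (-1)*u*v*w' + a*b*c) • (1:B) + (v*w') • i + ((-1)*u'*w' + u*w') • j + (c*w') • k := by
    simp only [hii, hjj, hkk, hij, hjk, hki, hkj2, hik2, hji2, Algebra.algebraMap_eq_smul_one, mul_add, add_mul, mul_sub, sub_mul, smul_mul_assoc, mul_smul_comm, smul_smul, one_mul, mul_one, smul_add, smul_sub]; module
  obtain ⟨ejki1, ejki2, ejki3, ejki4⟩ := indep _ _ _ _ _ _ _ _ (hLjki.symm.trans ((mul_assoc j k i).trans hRjki))
  have h1 : a * u' = 0 := by linear_combination -ejjk3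
  have h2 : a * v' = 0 := by linear_combination ejjk2
  have h3 : a * w' = 0 := by linear_combination -ekkj2
  have h4 : b * u' = 0 := by linear_combination -eiik3
  have h5 : b * v' = 0 := by linear_combination eikk4
  have h6 : b * w' = 0 := by linear_combination -eikk3
  have h7 : c * u' = 0 := by linear_combination eiij4
  have h8 : c * v' = 0 := by linear_combination eijj4
  have h9 : c * w' = 0 := by linear_combination -eiij2
  refine ⟨⟨h1, h2, h3⟩, ⟨h4, h5, h6⟩, ⟨h7, h8, h9⟩, ⟨?_, ?_, ?_⟩, ⟨?_, ?_, ?_⟩, ⟨?_, ?_, ?_⟩⟩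
  · linear_combination -eiij3
  · linear_combination eijk4
  · linear_combination -eikj3 + h5
  · linear_combination -ejik4 + h9
  · linear_combination -ejjk4
  · linear_combination ejki2
  · linear_combination -ejik3
  · linear_combination eijk2 + h1
  · linear_combination eikk2
end

section
/- Let B be a free R-algebra of rank 4 with standard involution and good basis satisfying the universal multiplication laws (U) with parameters a,b,c,u,v,w,u',v',w'. Then trd([i,j]·k̄) = −(4abc + uvw − au² − bv² − cw²) when u' = v' = w' = 0; i.e., for a free quaternion ring, {i,j,k} := trd((ij − ji)k̄) equals −D(q) where D(q) = 4abc + uvw − au² − bv² − cw² is the half-discriminant of the associated ternary form. -/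
/-- For the free quaternion ring with good basis `1, i, j, k` associated to
`q = ax² + by² + cz² + uyz + vxz + wxy`, one has
`trd([i,j]·k̄) = −D(q) = −(4abc + uvw − au² − bv² − cw²)`. -/
theorem stmt_16 {R B : Type*} [CommRing R] [Ring B] [Algebra R B]
    (a b c u v w : R) (i j k : B)
    (bB : Module.Basis (Fin 4) R B) (hb : ⇑bB = ![1, i, j, k])
    (σ : B →ₗ[R] B) (hσ1 : σ 1 = 1)
    (hσi : σ i = algebraMap R B u - i)
    (hσj : σ j = algebraMap R B v - j)
    (hσk : σ k = algebraMap R B w - k)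
    (hanti : ∀ x y : B, σ (x * y) = σ y * σ x)
    (hinv : ∀ x : B, σ (σ x) = x)
    (hstd : ∀ x : B, ∃ r : R, x * σ x = algebraMap R B r)
    (hii : i * i = u • i - algebraMap R B (b * c))
    (hjj : j * j = v • j - algebraMap R B (a * c))
    (hkk : k * k = w • k - algebraMap R B (a * b))
    (hjk : j * k = a • (algebraMap R B u - i))
    (hki : k * i = b • (algebraMap R B v - j))
    (hij : i * j = c • (algebraMap R B w - k))
    (hkj : k * j = algebraMap R B (-(v * w)) + a • i + w • j + v • k)
    (hik : i * k = algebraMap R B (-(u * w)) + w • i + b • j + u • k)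
    (hji : j * i = algebraMap R B (-(u * v)) + v • i + u • j + c • k) :
    (i * j - j * i) * σ k + σ ((i * j - j * i) * σ k)
      = algebraMap R B (-(4 * (a * b * c) + u * v * w
          - a * u ^ 2 - b * v ^ 2 - c * w ^ 2)) := by
  have hx : (i * j - j * i) * σ k
      = (c*w^2 + a*u^2 - 2*(a*b*c)) • (1 : B) - (a*u) • i + (b*v - w*u) • j - (c*w) • k := by
    rw [hσk, hij, hji]
    simp only [Algebra.algebraMap_eq_smul_one, mul_sub, sub_mul, add_mul, smul_mul_assoc,
      mul_smul_comm, one_mul, mul_one, hik, hjk, hkk, smul_sub, smul_add, smul_smul,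
      Algebra.algebraMap_eq_smul_one]
    module
  rw [hx]
  have hσ1' : ∀ r : R, σ (r • (1 : B)) = r • (1 : B) := by
    intro r; rw [map_smul, hσ1]
  simp only [map_sub, map_add, map_smul, hσ1', hσi, hσj, hσk,
    Algebra.algebraMap_eq_smul_one, smul_sub, smul_smul]
  module
end

section
/- If a free R-algebra B of rank 4 with standard involution satisfies both the quaternion multiplication laws (parameters u'=v'=w'=0) and the exceptional multiplication laws (a=b=c=0 and u'=u, v'=v, w'=w), then B ≅ R[i,j,k]/(i,j,k)² and in particular B is commutative. -/
/-- If a free rank-4 algebra with basis `1, i, j, k` satisfies both the quaternion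
multiplication laws (Q) and the exceptional multiplication laws (E), then it is isomorphic
to `R[i,j,k]/(i,j,k)²`: all products of `i, j, k` vanish and `B` is commutative. -/
theorem stmt_17 {R B : Type*} [CommRing R] [Ring B] [Algebra R B]
    (a b c u v w u₂ v₂ w₂ : R) (i j k : B)
    (bB : Module.Basis (Fin 4) R B) (hb : ⇑bB = ![1, i, j, k])
    -- the quaternion laws (Q) with parameters a, b, c, u, v, w:
    (hii : i * i = u • i - algebraMap R B (b * c))
    (hjj : j * j = v • j - algebraMap R B (a * c))
    (hkk : k * k = w • k - algebraMap R B (a * b))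
    (hjk : j * k = a • (algebraMap R B u - i))
    (hki : k * i = b • (algebraMap R B v - j))
    (hij : i * j = c • (algebraMap R B w - k))
    (hkj : k * j = algebraMap R B (-(v * w)) + a • i + w • j + v • k)
    (hik : i * k = algebraMap R B (-(u * w)) + w • i + b • j + u • k)
    (hji : j * i = algebraMap R B (-(u * v)) + v • i + u • j + c • k)
    -- the exceptional laws (E) with parameters u₂, v₂, w₂:
    (hii' : i * i = u₂ • i) (hjj' : j * j = v₂ • j) (hkk' : k * k = w₂ • k)
    (hjk' : j * k = v₂ • k) (hkj' : k * j = w₂ • j)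
    (hki' : k * i = w₂ • i) (hik' : i * k = u₂ • k)
    (hij' : i * j = u₂ • j) (hji' : j * i = v₂ • i) :
    (∀ x y : B, x * y = y * x) ∧
    i * i = 0 ∧ i * j = 0 ∧ i * k = 0 ∧
    j * i = 0 ∧ j * j = 0 ∧ j * k = 0 ∧
    k * i = 0 ∧ k * j = 0 ∧ k * k = 0 := by
  have li : LinearIndependent R ![(1:B), i, j, k] := hb ▸ bB.linearIndependent
  rw [Fintype.linearIndependent_iff] at li
  have key : ∀ r₀ r₁ r₂ r₃ : R, r₀ • (1:B) + r₁ • i + r₂ • j + r₃ • k = 0 →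
      r₀ = 0 ∧ r₁ = 0 ∧ r₂ = 0 ∧ r₃ = 0 := by
    intro r₀ r₁ r₂ r₃ h
    have := li ![r₀, r₁, r₂, r₃] (by
      simpa [Fin.sum_univ_four, add_assoc] using h)
    exact ⟨this 0, this 1, this 2, this 3⟩
  have am : ∀ r : R, algebraMap R B r = r • (1:B) := fun r =>
    Algebra.algebraMap_eq_smul_one r
  -- from hjk vs hjk': a = 0, v₂ = 0
  have h1 := key (a*u) (-a) 0 (-v₂) (by
    have := hjk.symm.trans hjk'
    rw [am, smul_sub, smul_smul] at this
    linear_combination (norm := module) this)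
  obtain ⟨-, ha, -, hv₂⟩ := h1
  rw [neg_eq_zero] at ha hv₂
  -- from hki vs hki': b = 0, w₂ = 0
  have h2 := key (b*v) (-w₂) (-b) 0 (by
    have := hki.symm.trans hki'
    rw [am, smul_sub, smul_smul] at this
    linear_combination (norm := module) this)
  obtain ⟨-, hw₂, hbz, -⟩ := h2
  rw [neg_eq_zero] at hw₂ hbz
  -- from hij vs hij': c = 0, u₂ = 0
  have h3 := key (c*w) (0) (-u₂) (-c) (by
    have := hij.symm.trans hij'
    rw [am, smul_sub, smul_smul] at this
    linear_combination (norm := module) this)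
  obtain ⟨-, -, hu₂, hcz⟩ := h3
  rw [neg_eq_zero] at hu₂ hcz
  -- from hkj vs hkj' (with w₂ = 0, a = 0): w = 0, v = 0
  have h4 := key (-(v*w)) a w v (by
    have := hkj.symm.trans hkj'
    rw [am, hw₂, zero_smul] at this
    linear_combination (norm := module) this)
  obtain ⟨-, -, hwz, hvz⟩ := h4
  -- from hik vs hik' (with u₂ = 0): u = 0
  have h5 := key (-(u*w)) w b u (by
    have := hik.symm.trans hik'
    rw [am, hu₂, zero_smul] at this
    linear_combination (norm := module) this)
  obtain ⟨-, -, -, huz⟩ := h5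
  have pii : i * i = 0 := by rw [hii', hu₂, zero_smul]
  have pjj : j * j = 0 := by rw [hjj', hv₂, zero_smul]
  have pkk : k * k = 0 := by rw [hkk', hw₂, zero_smul]
  have pjk : j * k = 0 := by rw [hjk', hv₂, zero_smul]
  have pkj : k * j = 0 := by rw [hkj', hw₂, zero_smul]
  have pki : k * i = 0 := by rw [hki', hw₂, zero_smul]
  have pik : i * k = 0 := by rw [hik', hu₂, zero_smul]
  have pij : i * j = 0 := by rw [hij', hu₂, zero_smul]
  have pji : j * i = 0 := by rw [hji', hv₂, zero_smul]
  refine ⟨?_, pii, pij, pik, pji, pjj, pjk, pki, pkj, pkk⟩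
  have hmul : (LinearMap.mul R B) = (LinearMap.mul R B).flip := by
    refine bB.ext fun m => bB.ext fun n => ?_
    fin_cases m <;> fin_cases n <;>
      simp [hb, pii, pij, pik, pji, pjj, pjk, pki, pkj, pkk]
  intro x y
  have := congrArg (fun f => f x y) hmul
  simpa using this
end

section
/- Let B be the free exceptional ring over R with basis 1, i, j, k (multiplication i² = ui, jk = vk, kj = wj, etc.). Then the canonical exterior form φ_B : ⋀²(B/R) → ⋀⁴B, characterized by φ_B(x∧y) = 1∧x∧y∧xy, is identically zero; equivalently, 1 ∧ x ∧ y ∧ xy = 0 in ⋀⁴B for all x, y ∈ B. -/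
/-- The canonical exterior form of a free exceptional ring is identically zero:
`1 ∧ x ∧ y ∧ xy = 0` in `⋀⁴B` for all `x, y ∈ B`. -/
theorem stmt_18 {R B : Type*} [CommRing R] [Ring B] [Algebra R B]
    (u v w : R) (i j k : B)
    (bB : Module.Basis (Fin 4) R B) (hb : ⇑bB = ![1, i, j, k])
    (hii : i * i = u • i) (hjj : j * j = v • j) (hkk : k * k = w • k)
    (hjk : j * k = v • k) (hkj : k * j = w • j)
    (hki : k * i = w • i) (hik : i * k = u • k)
    (hij : i * j = u • j) (hji : j * i = v • i)
    (x y : B) :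
    ExteriorAlgebra.ιMulti R 4 ![1, x, y, x * y] = 0 := by
  set a := bB.repr x 0 with ha
  set b := bB.repr x 1 with hbx
  set c := bB.repr x 2 with hc
  set d := bB.repr x 3 with hd
  set a' := bB.repr y 0 with ha'
  set b' := bB.repr y 1 with hb'
  set c' := bB.repr y 2 with hc'
  set d' := bB.repr y 3 with hd'
  have hx : x = a • (1:B) + b • i + c • j + d • k := by
    have := bB.sum_repr x
    rw [Fin.sum_univ_four] at this
    simp only [hb] at this
    simpa [Matrix.cons_val_zero, Matrix.cons_val_one] using this.symm
  have hy : y = a' • (1:B) + b' • i + c' • j + d' • k := by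
    have := bB.sum_repr y
    rw [Fin.sum_univ_four] at this
    simp only [hb] at this
    simpa using this.symm
  set lam := b * u + c * v + d * w with hlam
  have key : x * y = a' • x + (a + lam) • y + (-(a * a') - lam * a') • (1:B) := by
    rw [hx, hy]
    simp only [mul_add, add_mul, smul_mul_smul, hii, hjj, hkk, hij, hji, hik, hki,
      hjk, hkj, mul_one, one_mul, smul_smul, hlam]
    module
  have hupd : (![1, x, y, x * y] : Fin 4 → B) =
      Function.update ![1, x, y, 0] 3
        (a' • x + (a + lam) • y + (-(a * a') - lam * a') • (1:B)) := by
    funext m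
    fin_cases m <;> simp [key, Function.update]
  rw [hupd]
  have f := ExteriorAlgebra.ιMulti R (M := B) 4
  rw [(ExteriorAlgebra.ιMulti R 4).map_update_add, (ExteriorAlgebra.ιMulti R 4).map_update_add,
    (ExteriorAlgebra.ιMulti R 4).map_update_smul, (ExteriorAlgebra.ιMulti R 4).map_update_smul,
    (ExteriorAlgebra.ιMulti R 4).map_update_smul]
  have h1 : (ExteriorAlgebra.ιMulti R 4) (Function.update ![1, x, y, 0] 3 x) = 0 := by
    apply (ExteriorAlgebra.ιMulti R 4).map_eq_zero_of_eq _ (i := 1) (j := 3)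
    · simp [Function.update]
    · decide
  have h2 : (ExteriorAlgebra.ιMulti R 4) (Function.update ![1, x, y, 0] 3 y) = 0 := by
    apply (ExteriorAlgebra.ιMulti R 4).map_eq_zero_of_eq _ (i := 2) (j := 3)
    · simp [Function.update]
    · decide
  have h3 : (ExteriorAlgebra.ιMulti R 4) (Function.update ![1, x, y, 0] 3 (1:B)) = 0 := by
    apply (ExteriorAlgebra.ιMulti R 4).map_eq_zero_of_eq _ (i := 0) (j := 3)
    · simp [Function.update]
    · decide
  rw [h1, h2, h3]
  simp
end

section
/- Let B be the free quaternion ring over R with basis 1, i, j, k associated to the ternary form q(x,y,z) = ax² + by² + cz² + uyz + vxz + wxy. Identify ⋀⁴B ≅ R via 1∧i∧j∧k ↦ −1. Then the quadratic map φ on ⋀²(B/R) defined by φ(x∧y) = 1∧x∧y∧xy satisfies φ(x(j∧k) + y(k∧i) + z(i∧j)) = q(x,y,z) for all x, y, z ∈ R; in particular φ(j∧k) = a, φ(k∧i) = b, φ(i∧j) = c, φ((k∧i)+(i∧j)) − φ(k∧i) − φ(i∧j) = u (and cyclically for v, w). -/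
namespace Stmt19Aux

variable {R B : Type*} [CommRing R] [AddCommGroup B] [Module R B]

/-- `ιMulti` corestricted to the exterior power. -/
noncomputable def wedgeAlt (n : ℕ) : B [⋀^Fin n]→ₗ[R] (⋀[R]^n B) :=
  AlternatingMap.codRestrict (ExteriorAlgebra.ιMulti R n) _
    (fun v => ExteriorAlgebra.ιMulti_range R n (Set.mem_range_self v))

lemma wedgeAlt_apply (n : ℕ) (v : Fin n → B) : wedgeAlt (R := R) n v = wedge n v := rfl

/-- A linear functional on the 2nd exterior power from an alternating 2-form. -/
noncomputable def lift2 (D : B [⋀^Fin 2]→ₗ[R] R) : (⋀[R]^2 B) →ₗ[R] R :=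
  (ExteriorAlgebra.liftAlternating (Function.update 0 2 D)).comp (Submodule.subtype _)

lemma lift2_wedge (D : B [⋀^Fin 2]→ₗ[R] R) (v : Fin 2 → B) :
    lift2 D (wedge 2 v) = D v := by
  show ExteriorAlgebra.liftAlternating _ (ExteriorAlgebra.ιMulti R 2 v) = D v
  rw [ExteriorAlgebra.liftAlternating_apply_ιMulti]
  simp

lemma vol_eq_det (bB : Module.Basis (Fin 4) R B) (g : (⋀[R]^4 B) →ₗ[R] R) (v : Fin 4 → B) :
    g (wedge 4 v) = g (wedge 4 ⇑bB) * (Matrix.of fun s t => bB.repr (v s) t).det := by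
  set D : B [⋀^Fin 4]→ₗ[R] R :=
    Matrix.detRowAlternating.compLinearMap (LinearMap.pi fun t : Fin 4 => bB.coord t) with hD
  have hDval : ∀ vv : Fin 4 → B, D vv = (Matrix.of fun s t => bB.repr (vv s) t).det := by
    intro vv
    rfl
  have base : (g.compAlternatingMap (wedgeAlt 4)) ⇑bB
      = (g (wedge 4 ⇑bB) • D) ⇑bB := by
    have h1 : D ⇑bB = 1 := by
      rw [hDval]
      have : (Matrix.of fun s t => bB.repr (bB s) t) = (1 : Matrix (Fin 4) (Fin 4) R) := by
        ext s t
        simp [Matrix.one_apply, Module.Basis.repr_self, Finsupp.single_apply]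
      rw [this, Matrix.det_one]
    simp [h1, wedgeAlt_apply]
  have h : g.compAlternatingMap (wedgeAlt 4) = g (wedge 4 ⇑bB) • D := by
    apply Module.Basis.ext_alternating bB
    intro gi hgi
    have hbij := Finite.injective_iff_bijective.mp hgi
    calc (g.compAlternatingMap (wedgeAlt 4)) (fun p => bB (gi p))
        = (g.compAlternatingMap (wedgeAlt 4)) (⇑bB ∘ ⇑(Equiv.ofBijective gi hbij)) := rfl
      _ = Equiv.Perm.sign (Equiv.ofBijective gi hbij) •
            (g.compAlternatingMap (wedgeAlt 4)) ⇑bB := AlternatingMap.map_perm _ _ _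
      _ = Equiv.Perm.sign (Equiv.ofBijective gi hbij) •
            (g (wedge 4 ⇑bB) • D) ⇑bB := by rw [base]
      _ = (g (wedge 4 ⇑bB) • D) (⇑bB ∘ ⇑(Equiv.ofBijective gi hbij)) :=
            (AlternatingMap.map_perm _ _ _).symm
      _ = (g (wedge 4 ⇑bB) • D) (fun p => bB (gi p)) := rfl
  have := congrArg (fun F : B [⋀^Fin 4]→ₗ[R] R => F v) h
  simpa [wedgeAlt_apply, hDval, smul_eq_mul] using this

end Stmt19Aux
set_option maxHeartbeats 2000000

open Stmt19Aux QuadraticMap in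
/-- For the free quaternion ring `B` associated to `q = ax² + by² + cz² + uyz + vxz + wxy`,
identifying `⋀⁴B ≅ R` by `1∧i∧j∧k ↦ −1`, the canonical exterior form `φ`, characterized by
`φ(α∧β) = 1∧α∧β∧αβ`, satisfies `φ(x(j∧k) + y(k∧i) + z(i∧j)) = q(x,y,z)`. -/
theorem stmt_19 {R B : Type*} [CommRing R] [Ring B] [Algebra R B]
    (a b c u v w : R) (i j k : B)
    (bB : Module.Basis (Fin 4) R B) (hb : ⇑bB = ![1, i, j, k])
    (hii : i * i = u • i - algebraMap R B (b * c))
    (hjj : j * j = v • j - algebraMap R B (a * c))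
    (hkk : k * k = w • k - algebraMap R B (a * b))
    (hjk : j * k = a • (algebraMap R B u - i))
    (hki : k * i = b • (algebraMap R B v - j))
    (hij : i * j = c • (algebraMap R B w - k))
    (hkj : k * j = algebraMap R B (-(v * w)) + a • i + w • j + v • k)
    (hik : i * k = algebraMap R B (-(u * w)) + w • i + b • j + u • k)
    (hji : j * i = algebraMap R B (-(u * v)) + v • i + u • j + c • k)
    (f : (⋀[R]^4 B) ≃ₗ[R] R)
    (hf : f (wedge 4 ![1, i, j, k]) = -1) :
    ∃ φ : QuadraticMap R (⋀[R]^2 B) R,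
      (∀ α β : B, φ (wedge 2 ![α, β]) = f (wedge 4 ![1, α, β, α * β])) ∧
      (∀ x y z : R,
        φ (x • wedge 2 ![j, k] + y • wedge 2 ![k, i] + z • wedge 2 ![i, j])
          = a * x ^ 2 + b * y ^ 2 + c * z ^ 2 + u * (y * z) + v * (x * z) + w * (x * y)) := by
  have hb0 : bB 0 = 1 := by rw [show bB 0 = ![1,i,j,k] 0 from congrFun hb 0]; rfl
  have hb1 : bB 1 = i := by rw [show bB 1 = ![1,i,j,k] 1 from congrFun hb 1]; rfl
  have hb2 : bB 2 = j := by rw [show bB 2 = ![1,i,j,k] 2 from congrFun hb 2]; rfl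
  have hb3 : bB 3 = k := by rw [show bB 3 = ![1,i,j,k] 3 from congrFun hb 3]; rfl
  -- coordinates of an explicit combination
  have hrepr : ∀ (x0 x1 x2 x3 : R) (t : Fin 4),
      bB.repr (x0 • (1:B) + x1 • i + x2 • j + x3 • k) t = ![x0, x1, x2, x3] t := by
    intro x0 x1 x2 x3 t
    rw [← hb0, ← hb1, ← hb2, ← hb3]
    fin_cases t <;>
      simp [Module.Basis.repr_self, Finsupp.single_apply, Finsupp.add_apply, Finsupp.smul_apply]
  have hrepr1 : ∀ t : Fin 4, bB.repr (1:B) t = ![(1:R),0,0,0] t := by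
    intro t; rw [← hb0]
    fin_cases t <;> simp [Module.Basis.repr_self, Finsupp.single_apply]
  have hri : ∀ t : Fin 4, bB.repr i t = ![(0:R),1,0,0] t := by
    intro t; rw [← hb1]
    fin_cases t <;> simp [Module.Basis.repr_self, Finsupp.single_apply]
  have hrj : ∀ t : Fin 4, bB.repr j t = ![(0:R),0,1,0] t := by
    intro t; rw [← hb2]
    fin_cases t <;> simp [Module.Basis.repr_self, Finsupp.single_apply]
  have hrk : ∀ t : Fin 4, bB.repr k t = ![(0:R),0,0,1] t := by
    intro t; rw [← hb3]
    fin_cases t <;> simp [Module.Basis.repr_self, Finsupp.single_apply]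
  -- decomposition of an arbitrary element
  have hdec : ∀ x : B,
      x = bB.repr x 0 • (1:B) + bB.repr x 1 • i + bB.repr x 2 • j + bB.repr x 3 • k := by
    intro x
    conv_lhs => rw [← Module.Basis.sum_repr bB x]
    rw [Fin.sum_univ_four, hb0, hb1, hb2, hb3]
  -- the multiplication of two explicit combinations
  have hmulco : ∀ A0 A1 A2 A3 B0 B1 B2 B3 : R,
      (A0 • (1:B) + A1 • i + A2 • j + A3 • k) * (B0 • (1:B) + B1 • i + B2 • j + B3 • k) =
      (A0*B0 - A1*B1*(b*c) + A1*B2*(c*w) - A1*B3*(u*w) - A2*B1*(u*v) - A2*B2*(a*c)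
          + A2*B3*(a*u) + A3*B1*(b*v) - A3*B2*(v*w) - A3*B3*(a*b)) • (1:B)
      + (A0*B1 + A1*B0 + A1*B1*u + A1*B3*w + A2*B1*v - A2*B3*a + A3*B2*a) • i
      + (A0*B2 + A2*B0 + A1*B3*b + A2*B1*u + A2*B2*v - A3*B1*b + A3*B2*w) • j
      + (A0*B3 + A3*B0 - A1*B2*c + A1*B3*u + A2*B1*c + A3*B2*v + A3*B3*w) • k := by
    intro A0 A1 A2 A3 B0 B1 B2 B3
    simp only [mul_add, add_mul, smul_mul_assoc, mul_smul_comm, smul_smul, one_mul, mul_one]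
    rw [hii, hjj, hkk, hjk, hki, hij, hkj, hik, hji]
    simp only [Algebra.algebraMap_eq_smul_one]
    module
  -- value of f on arbitrary 4-wedges
  have hvol : ∀ vv : Fin 4 → B,
      f (wedge 4 vv) = -(Matrix.of fun s t => bB.repr (vv s) t).det := by
    intro vv
    have h := vol_eq_det bB (f : (⋀[R]^4 B) →ₗ[R] R) vv
    have hW : (f : (⋀[R]^4 B) →ₗ[R] R) (wedge 4 ⇑bB) = -1 := by
      rw [hb]; exact hf
    simpa [hW] using h
  -- explicit 4×4 determinant expansion
  have det4 : ∀ m00 m01 m02 m03 m10 m11 m12 m13 m20 m21 m22 m23 m30 m31 m32 m33 : R,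
      Matrix.det !![m00,m01,m02,m03; m10,m11,m12,m13; m20,m21,m22,m23; m30,m31,m32,m33] =
      m00*m11*m22*m33 - m00*m11*m23*m32 - m00*m12*m21*m33 + m00*m12*m23*m31
      + m00*m13*m21*m32 - m00*m13*m22*m31 - m01*m10*m22*m33 + m01*m10*m23*m32
      + m01*m12*m20*m33 - m01*m12*m23*m30 - m01*m13*m20*m32 + m01*m13*m22*m30
      + m02*m10*m21*m33 - m02*m10*m23*m31 - m02*m11*m20*m33 + m02*m11*m23*m30
      + m02*m13*m20*m31 - m02*m13*m21*m30 - m03*m10*m21*m32 + m03*m10*m22*m31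
      + m03*m11*m20*m32 - m03*m11*m22*m30 - m03*m12*m20*m31 + m03*m12*m21*m30 := by
    intros
    rw [Matrix.det_succ_row_zero]
    simp [Fin.sum_univ_succ, Matrix.det_fin_three, Matrix.submatrix_apply, Fin.succAbove]
    ring
  -- the coordinate functionals
  set L : Fin 4 → Fin 4 → ((⋀[R]^2 B) →ₗ[R] R) := fun s t =>
    lift2 (Matrix.detRowAlternating.compLinearMap (LinearMap.pi ![bB.coord s, bB.coord t]))
    with hLdef
  have hL : ∀ (s t : Fin 4) (x y : B),
      L s t (wedge 2 ![x, y]) = bB.repr x s * bB.repr y t - bB.repr x t * bB.repr y s := by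
    intro s t x y
    rw [hLdef, lift2_wedge]
    show (Matrix.of fun p q => (![bB.coord s, bB.coord t] q) (![x,y] p)).det = _
    simp [Matrix.det_fin_two, Module.Basis.coord_apply]
  refine ⟨linMulLin (a • L 2 3) (L 2 3) + linMulLin (b • L 3 1) (L 3 1)
      + linMulLin (c • L 1 2) (L 1 2) + linMulLin (u • L 3 1) (L 1 2)
      + linMulLin (v • L 2 3) (L 1 2) + linMulLin (w • L 2 3) (L 3 1), ?_, ?_⟩
  · -- property (1)
    have key1 : ∀ A0 A1 A2 A3 B0 B1 B2 B3 : R,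
        (linMulLin (a • L 2 3) (L 2 3) + linMulLin (b • L 3 1) (L 3 1)
          + linMulLin (c • L 1 2) (L 1 2) + linMulLin (u • L 3 1) (L 1 2)
          + linMulLin (v • L 2 3) (L 1 2) + linMulLin (w • L 2 3) (L 3 1))
          (wedge 2 ![A0 • (1:B) + A1 • i + A2 • j + A3 • k,
                     B0 • (1:B) + B1 • i + B2 • j + B3 • k])
        = f (wedge 4 ![1, A0 • (1:B) + A1 • i + A2 • j + A3 • k,
                       B0 • (1:B) + B1 • i + B2 • j + B3 • k,
                       (A0 • (1:B) + A1 • i + A2 • j + A3 • k)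
                         * (B0 • (1:B) + B1 • i + B2 • j + B3 • k)]) := by
      intro A0 A1 A2 A3 B0 B1 B2 B3
      rw [hmulco, hvol]
      have hM : (Matrix.of fun s t => bB.repr
          (![1, A0 • (1:B) + A1 • i + A2 • j + A3 • k,
             B0 • (1:B) + B1 • i + B2 • j + B3 • k,
             (A0*B0 - A1*B1*(b*c) + A1*B2*(c*w) - A1*B3*(u*w) - A2*B1*(u*v) - A2*B2*(a*c)
                + A2*B3*(a*u) + A3*B1*(b*v) - A3*B2*(v*w) - A3*B3*(a*b)) • (1:B)
             + (A0*B1 + A1*B0 + A1*B1*u + A1*B3*w + A2*B1*v - A2*B3*a + A3*B2*a) • i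
             + (A0*B2 + A2*B0 + A1*B3*b + A2*B1*u + A2*B2*v - A3*B1*b + A3*B2*w) • j
             + (A0*B3 + A3*B0 - A1*B2*c + A1*B3*u + A2*B1*c + A3*B2*v + A3*B3*w) • k] s) t)
          = !![1,0,0,0; A0,A1,A2,A3; B0,B1,B2,B3;
              (A0*B0 - A1*B1*(b*c) + A1*B2*(c*w) - A1*B3*(u*w) - A2*B1*(u*v) - A2*B2*(a*c)
                + A2*B3*(a*u) + A3*B1*(b*v) - A3*B2*(v*w) - A3*B3*(a*b)),
              (A0*B1 + A1*B0 + A1*B1*u + A1*B3*w + A2*B1*v - A2*B3*a + A3*B2*a),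
              (A0*B2 + A2*B0 + A1*B3*b + A2*B1*u + A2*B2*v - A3*B1*b + A3*B2*w),
              (A0*B3 + A3*B0 - A1*B2*c + A1*B3*u + A2*B1*c + A3*B2*v + A3*B3*w)] := by
        ext s t
        fin_cases s <;> fin_cases t <;>
          simp [_root_.map_add, _root_.map_smul, Finsupp.add_apply, Finsupp.smul_apply,
            smul_eq_mul, hrepr1, hri, hrj, hrk]
      rw [hM, det4]
      simp only [QuadraticMap.add_apply, linMulLin_apply, LinearMap.smul_apply, smul_eq_mul, hL,
        hrepr]
      simp only [Matrix.cons_val_zero, Matrix.cons_val_one, Matrix.head_cons,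
        Matrix.cons_val_two, Matrix.tail_cons, Matrix.cons_val_three]
      ring
    intro α β
    have hα := hdec α
    have hβ := hdec β
    calc _ = f (wedge 4 ![1, α, β, α * β]) := by rw [hα, hβ]; exact key1 _ _ _ _ _ _ _ _
      _ = _ := rfl
  · -- property (2)
    intro x y z
    have hcombo : ∀ s t : Fin 4,
        L s t (x • wedge 2 ![j, k] + y • wedge 2 ![k, i] + z • wedge 2 ![i, j])
        = x * L s t (wedge 2 ![j, k]) + y * L s t (wedge 2 ![k, i])
          + z * L s t (wedge 2 ![i, j]) := by
      intro s t
      rw [map_add, map_add, LinearMap.map_smul, LinearMap.map_smul, LinearMap.map_smul]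
      simp [smul_eq_mul]
    simp only [QuadraticMap.add_apply, linMulLin_apply, LinearMap.smul_apply, smul_eq_mul,
      hcombo, hL]
    simp only [hri, hrj, hrk]
    simp only [Matrix.cons_val]
    norm_num
    ring
end
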